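/- For every x ∈ ℝ, the limit as k → ∞ of √k · q_k(x) equals x²/2. -/

import Mathlib

/-- The implicit regularizer `q_k` of the diagonal linear network. -/
noncomputable def qk (k x : ℝ) : ℝ :=
  Real.sqrt k / 4 * (1 - Real.sqrt (1 + 4 * x ^ 2 / k)
    + 2 * x / Real.sqrt k * Real.arsinh (2 * x / Real.sqrt k))

/-- for every `x`, `√k · q_k(x) → x²/2` as `k → ∞`. -/
theorem stmt_5 (x : ℝ) :
    Filter.Tendsto (fun k => Real.sqrt k * qk k x)
      Filter.atTop (nhds (x ^ 2 / 2)) := by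
  rcases eq_or_ne x 0 with rfl | hx
  · simpa [qk] using (tendsto_const_nhds : Filter.Tendsto (fun _ : ℝ => (0:ℝ))
      Filter.atTop (nhds 0))
  · -- u k = 2x/√k → 0, nonzero for k > 0
    have hsqrt : Filter.Tendsto Real.sqrt Filter.atTop Filter.atTop := by
      refine Filter.tendsto_atTop.2 fun b => Filter.eventually_atTop.2 ⟨b ^ 2, fun k hk => ?_⟩
      calc b ≤ |b| := le_abs_self b
        _ = Real.sqrt (b ^ 2) := (Real.sqrt_sq_eq_abs b).symm
        _ ≤ Real.sqrt k := Real.sqrt_le_sqrt hk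
    have hu0 : Filter.Tendsto (fun k : ℝ => 2 * x / Real.sqrt k) Filter.atTop (nhds 0) :=
      tendsto_const_nhds.div_atTop hsqrt
    have hune : ∀ᶠ k : ℝ in Filter.atTop, 2 * x / Real.sqrt k ≠ 0 := by
      filter_upwards [Filter.eventually_gt_atTop (0:ℝ)] with k hk
      have hs : Real.sqrt k ≠ 0 := ne_of_gt (Real.sqrt_pos.mpr hk)
      exact div_ne_zero (by simpa using hx) hs
    have hu : Filter.Tendsto (fun k : ℝ => 2 * x / Real.sqrt k) Filter.atTop (nhdsWithin 0 {0}ᶜ) :=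
      tendsto_nhdsWithin_iff.mpr ⟨hu0, by filter_upwards [hune] with k h using h⟩
    -- slope limit: arsinh u / u → 1
    have hslope : Filter.Tendsto (fun u : ℝ => Real.arsinh u / u) (nhdsWithin 0 {0}ᶜ)
        (nhds 1) := by
      have h := hasDerivAt_iff_tendsto_slope.mp (Real.hasDerivAt_arsinh 0)
      have h1 : (Real.sqrt (1 + (0:ℝ) ^ 2))⁻¹ = 1 := by norm_num
      rw [h1] at h
      refine h.congr (fun u => ?_)
      simp [slope, Real.arsinh_zero, div_eq_inv_mul]
    have h2 : Filter.Tendsto (fun k : ℝ =>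
        x ^ 2 * (Real.arsinh (2 * x / Real.sqrt k) / (2 * x / Real.sqrt k)))
        Filter.atTop (nhds (x ^ 2 * 1)) :=
      Filter.Tendsto.const_mul _ (hslope.comp hu)
    -- first term via continuity
    have hcont : Continuous (fun u : ℝ => -x ^ 2 / (1 + Real.sqrt (1 + u ^ 2))) := by
      refine continuous_const.div (by continuity) (fun u => ?_)
      positivity
    have h1 : Filter.Tendsto (fun k : ℝ =>
        -x ^ 2 / (1 + Real.sqrt (1 + (2 * x / Real.sqrt k) ^ 2)))
        Filter.atTop (nhds (-x ^ 2 / 2)) := by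
      have h := (hcont.tendsto 0).comp hu0
      simp only [Function.comp_def] at h
      have e : -x ^ 2 / (1 + Real.sqrt (1 + (0:ℝ) ^ 2)) = -x ^ 2 / 2 := by norm_num
      rwa [e] at h
    have hsum := h1.add h2
    have hval : -x ^ 2 / 2 + x ^ 2 * 1 = x ^ 2 / 2 := by ring
    rw [hval] at hsum
    refine hsum.congr' ?_
    filter_upwards [Filter.eventually_gt_atTop (0:ℝ)] with k hk
    have hks : Real.sqrt k > 0 := Real.sqrt_pos.mpr hk
    have hsq : Real.sqrt k * Real.sqrt k = k := Real.mul_self_sqrt hk.le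
    set u : ℝ := 2 * x / Real.sqrt k with hudef
    have hu2 : u ^ 2 = 4 * x ^ 2 / k := by
      rw [hudef, div_pow]
      rw [show (Real.sqrt k) ^ 2 = k from Real.sq_sqrt hk.le]
      ring
    have hs1 : Real.sqrt (1 + 4 * x ^ 2 / k) = Real.sqrt (1 + u ^ 2) := by rw [hu2]
    have hsnn : (0:ℝ) ≤ 1 + u ^ 2 := by positivity
    have hssq : Real.sqrt (1 + u ^ 2) ^ 2 = 1 + u ^ 2 := Real.sq_sqrt hsnn
    have hspos : (0:ℝ) < 1 + Real.sqrt (1 + u ^ 2) := by positivity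
    have hune' : u ≠ 0 := div_ne_zero (by simpa using hx) (ne_of_gt hks)
    -- key identity
    have key1 : k / 4 * (1 - Real.sqrt (1 + u ^ 2)) = -x ^ 2 / (1 + Real.sqrt (1 + u ^ 2)) := by
      have hk4 : k / 4 * u ^ 2 = x ^ 2 := by
        rw [hu2]; field_simp
      field_simp
      nlinarith [hssq, hk4]
    have key2 : k / 4 * (u * Real.arsinh u) = x ^ 2 * (Real.arsinh u / u) := by
      have hk4 : k / 4 * u ^ 2 = x ^ 2 := by
        rw [hu2]; field_simp
      field_simp
      linear_combination 4 * Real.arsinh u * hk4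
    calc -x ^ 2 / (1 + Real.sqrt (1 + u ^ 2)) + x ^ 2 * (Real.arsinh u / u)
        = k / 4 * (1 - Real.sqrt (1 + u ^ 2)) + k / 4 * (u * Real.arsinh u) := by
          rw [key1, key2]
      _ = Real.sqrt k * qk k x := by
          rw [qk, hs1, ← hudef]
          linear_combination (-(1 - Real.sqrt (1 + u ^ 2) + u * Real.arsinh u) / 4) * hsq
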